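/- Define for p₀ ∈ (0,1] and Fᵢ ∈ [0,1] with Fᵢ² + p₀ > 1 the function g(ζ) = (Fᵢ − √((1−p₀)(1−ζ/4)))/√(p₀ ζ/4) on ζ ∈ (0,4]. Then for all ζ ∈ (0,4], g(ζ) ≥ √((p₀ + Fᵢ² − 1)/p₀), i.e. the minimum over ζ of g equals √((p₀ + Fᵢ² − 1)/p₀). -/

import Mathlib

private lemma key_cs (a b t : ℝ) (ha : 0 ≤ a) (hb : 0 ≤ b) (ht0 : 0 ≤ t) (ht1 : t ≤ 1) :
    Real.sqrt (a * (1 - t)) + Real.sqrt (b * t) ≤ Real.sqrt (a + b) := by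
  have h1t : (0:ℝ) ≤ 1 - t := by linarith
  rw [Real.sqrt_mul ha, Real.sqrt_mul hb]
  have hA : 0 ≤ Real.sqrt a * Real.sqrt (1 - t) + Real.sqrt b * Real.sqrt t := by positivity
  rw [Real.le_sqrt hA (by linarith)]
  have e1 : Real.sqrt a ^ 2 = a := Real.sq_sqrt ha
  have e2 : Real.sqrt b ^ 2 = b := Real.sq_sqrt hb
  have e3 : Real.sqrt t ^ 2 = t := Real.sq_sqrt ht0
  have e4 : Real.sqrt (1 - t) ^ 2 = 1 - t := Real.sq_sqrt h1t
  nlinarith [sq_nonneg (Real.sqrt a * Real.sqrt t - Real.sqrt b * Real.sqrt (1 - t))]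

theorem rate_fidelity_optimization (p₀ Fi : ℝ)
    (hp : p₀ ∈ Set.Ioc (0 : ℝ) 1) (hF : Fi ∈ Set.Icc (0 : ℝ) 1)
    (hreg : Fi ^ 2 + p₀ > 1) :
    (∀ ζ ∈ Set.Ioc (0 : ℝ) 4,
        (Fi - Real.sqrt ((1 - p₀) * (1 - ζ / 4))) / Real.sqrt (p₀ * ζ / 4)
          ≥ Real.sqrt ((p₀ + Fi ^ 2 - 1) / p₀)) ∧
    (∃ ζ ∈ Set.Ioc (0 : ℝ) 4,
        (Fi - Real.sqrt ((1 - p₀) * (1 - ζ / 4))) / Real.sqrt (p₀ * ζ / 4)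
          = Real.sqrt ((p₀ + Fi ^ 2 - 1) / p₀)) := by
  obtain ⟨hp0, hp1⟩ := hp
  obtain ⟨hF0, hF1⟩ := hF
  set a : ℝ := 1 - p₀ with ha_def
  set b : ℝ := p₀ + Fi ^ 2 - 1 with hb_def
  have ha : 0 ≤ a := by simp [ha_def]; linarith
  have hb : 0 < b := by simp [hb_def]; linarith
  have hab : a + b = Fi ^ 2 := by ring
  have hFpos : 0 < Fi := by
    rcases hF0.lt_or_eq with h | h
    · exact h
    · exfalso; rw [← h] at hreg; simp at hreg; linarith
  constructor
  · intro ζ hζ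
    obtain ⟨hζ0, hζ4⟩ := hζ
    have ht0 : (0:ℝ) ≤ ζ / 4 := by linarith
    have ht1 : ζ / 4 ≤ 1 := by linarith
    have hkey := key_cs a b (ζ / 4) ha hb.le ht0 ht1
    rw [hab, Real.sqrt_sq hF0] at hkey
    have hdpos : 0 < Real.sqrt (p₀ * ζ / 4) := Real.sqrt_pos.2 (by positivity)
    rw [ge_iff_le, le_div_iff₀ hdpos]
    have hmul : Real.sqrt (b / p₀) * Real.sqrt (p₀ * ζ / 4) = Real.sqrt (b * (ζ / 4)) := by
      rw [← Real.sqrt_mul (by positivity)]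
      congr 1
      field_simp
    rw [hmul]
    linarith
  · refine ⟨4 * b / Fi ^ 2, ⟨by positivity, ?_⟩, ?_⟩
    · rw [div_le_iff₀ (by positivity)]
      nlinarith
    · have hF2 : (0:ℝ) < Fi ^ 2 := by positivity
      have e1 : 1 - 4 * b / Fi ^ 2 / 4 = a / Fi ^ 2 := by
        field_simp; nlinarith [hab]
      have e2 : (1 - p₀) * (a / Fi ^ 2) = (a / Fi) ^ 2 := by
        rw [← ha_def]; field_simp
      have e3 : p₀ * (4 * b / Fi ^ 2) / 4 = p₀ * b / Fi ^ 2 := by ring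
      rw [e1, e2, Real.sqrt_sq (by positivity), e3]
      have e4 : Real.sqrt (p₀ * b / Fi ^ 2) = Real.sqrt (p₀ * b) / Fi := by
        rw [Real.sqrt_div (by positivity), Real.sqrt_sq hF0]
      rw [e4]
      have hsPB : 0 < Real.sqrt (p₀ * b) := Real.sqrt_pos.2 (by positivity)
      have l1 : (Fi - a / Fi) / (Real.sqrt (p₀ * b) / Fi) = b / Real.sqrt (p₀ * b) := by
        rw [div_div_eq_mul_div, show (Fi - a / Fi) * Fi = b by field_simp; nlinarith [hab]]
      rw [l1, div_eq_iff hsPB.ne', ← Real.sqrt_mul (by positivity),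
        show b / p₀ * (p₀ * b) = b ^ 2 by field_simp, Real.sqrt_sq hb.le]
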